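/- Serre's p-adic Sato–Tate measure μ_p = ((p+1)/π) · √(1 - x²/4) / ((p^{1/2} + p^{-1/2})² - x²) dx is a probability measure on [-2,2], for every real p > 1. -/

import Mathlib

open MeasureTheory Real

set_option maxHeartbeats 1000000

/-- Serre's `p`-adic Sato–Tate measure
`μ_p = ((p+1)/π) · √(1 - x²/4) / ((p^{1/2} + p^{-1/2})² - x²) dx`
is a probability measure on `[-2,2]`, for every real `p > 1`. -/
theorem serre_padic_satoTate_total_mass_one (p : ℝ) (hp : 1 < p) :
    ∫ x in (-2 : ℝ)..2,
      ((p + 1) / π) * Real.sqrt (1 - x ^ 2 / 4) /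
        ((Real.sqrt p + (Real.sqrt p)⁻¹) ^ 2 - x ^ 2) = 1 := by
  have hπ : 0 < π := Real.pi_pos
  obtain ⟨s, hs1, rfl⟩ : ∃ s : ℝ, 1 < s ∧ s ^ 2 = p := by
    refine ⟨Real.sqrt p, ?_, Real.sq_sqrt (by linarith)⟩
    have := Real.sqrt_lt_sqrt (by norm_num : (0:ℝ) ≤ 1) hp
    simpa using this
  have hs0 : 0 < s := by linarith
  rw [show Real.sqrt (s ^ 2) = s from Real.sqrt_sq hs0.le]
  have hsinv : s⁻¹ < 1 := (inv_lt_one₀ hs0).2 hs1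
  have hsi : s * s⁻¹ = 1 := mul_inv_cancel₀ hs0.ne'
  set a : ℝ := s + s⁻¹ with ha_def
  set b : ℝ := s - s⁻¹ with hb_def
  have hb0 : 0 < b := by
    have : s⁻¹ < s := lt_trans hsinv hs1
    simp [hb_def]; linarith
  have ha2 : 2 < a := by
    have h := sq_nonneg (s - 1)
    have h2 : 0 < s⁻¹ := inv_pos.2 hs0
    rw [ha_def]
    nlinarith [mul_pos hs0 h2]
  have hab : a ^ 2 - b ^ 2 = 4 := by
    have : a ^ 2 - b ^ 2 = 4 * (s * s⁻¹) := by rw [ha_def, hb_def]; ring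
    rw [this, hsi]; ring
  have hb2 : a ^ 2 - 4 = b ^ 2 := by linarith
  have hsab : a * s = s ^ 2 + 1 := by rw [ha_def]; field_simp
  have hbab : b * s = s ^ 2 - 1 := by rw [hb_def]; field_simp
  clear_value a b
  clear ha_def hb_def hsi hsinv
  -- the antiderivative
  set F : ℝ → ℝ := fun x => ((s ^ 2 + 1) / (2 * π)) *
      (Real.arcsin (x / 2) - (b / a) * Real.arcsin (b * x / (2 * Real.sqrt (a ^ 2 - x ^ 2)))) with hF_def
  have ha0 : 0 < a := by linarith
  -- positivity on Icc
  have hax : ∀ x : ℝ, x ∈ Set.Icc (-2:ℝ) 2 → 0 < a ^ 2 - x ^ 2 := by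
    intro x hx
    have h1 : x ^ 2 ≤ 4 := by nlinarith [hx.1, hx.2]
    nlinarith [sq_nonneg b]
  -- continuity of F on Icc
  have hcontF : ContinuousOn F (Set.Icc (-2:ℝ) 2) := by
    apply ContinuousOn.mul continuousOn_const
    apply ContinuousOn.sub
    · exact (Real.continuous_arcsin.comp (continuous_id.div_const 2)).continuousOn
    · apply ContinuousOn.mul continuousOn_const
      apply Real.continuous_arcsin.comp_continuousOn
      apply ContinuousOn.div (continuousOn_const.mul continuousOn_id)
      · exact continuousOn_const.mul
          ((Real.continuous_sqrt.comp (by fun_prop)).continuousOn)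
      · intro x hx
        have := hax x hx
        positivity
  -- derivative on Ioo
  have hderiv : ∀ x ∈ Set.Ioo (-2:ℝ) 2, HasDerivAt F
      (((s ^ 2 + 1) / π) * Real.sqrt (1 - x ^ 2 / 4) / (a ^ 2 - x ^ 2)) x := by
    intro x hx
    have hx1 : -2 < x := hx.1
    have hx2' : x < 2 := hx.2
    have h4x : 0 < 4 - x ^ 2 := by nlinarith
    have haxx : 0 < a ^ 2 - x ^ 2 := hax x ⟨hx1.le, hx2'.le⟩
    set S : ℝ := Real.sqrt (4 - x ^ 2) with hS_def
    set T : ℝ := Real.sqrt (a ^ 2 - x ^ 2) with hT_def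
    have hS0 : 0 < S := Real.sqrt_pos.2 h4x
    have hT0 : 0 < T := Real.sqrt_pos.2 haxx
    have hS2 : S ^ 2 = 4 - x ^ 2 := Real.sq_sqrt h4x.le
    have hT2 : T ^ 2 = a ^ 2 - x ^ 2 := Real.sq_sqrt haxx.le
    -- derivative of arcsin(x/2)
    have d1 : HasDerivAt (fun y : ℝ => Real.arcsin (y / 2)) (1 / S) x := by
      have h := (Real.hasDerivAt_arcsin
        (by intro h; rw [div_eq_iff (by norm_num : (2:ℝ) ≠ 0)] at h; simp only [id_eq] at h; linarith)
        (by intro h; rw [div_eq_iff (by norm_num : (2:ℝ) ≠ 0)] at h; simp only [id_eq] at h; linarith)).comp x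
        ((hasDerivAt_id x).div_const 2)
      refine h.congr_deriv ?_
      simp only [id_eq]
      have : Real.sqrt (1 - (x / 2) ^ 2) = S / 2 := by
        rw [show (1 - (x/2)^2 : ℝ) = (S/2)^2 by linear_combination (-(1:ℝ)/4) * hS2]
        exact Real.sqrt_sq (by positivity)
      rw [this]
      field_simp
    -- derivative of sqrt(a^2 - x^2)
    have d2 : HasDerivAt (fun y : ℝ => Real.sqrt (a ^ 2 - y ^ 2)) (-x / T) x := by
      have hinner : HasDerivAt (fun y : ℝ => a ^ 2 - y ^ 2) (-(2 * x)) x := by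
        simpa using (hasDerivAt_pow 2 x).const_sub (a ^ 2)
      have h := (Real.hasDerivAt_sqrt haxx.ne').comp x hinner
      refine h.congr_deriv ?_
      rw [← hT_def]
      field_simp
    -- derivative of g = b x / (2 sqrt(a^2-x^2))
    have d3 : HasDerivAt (fun y : ℝ => b * y / (2 * Real.sqrt (a ^ 2 - y ^ 2)))
        (b * a ^ 2 / (2 * (a ^ 2 - x ^ 2) * T)) x := by
      have hnum : HasDerivAt (fun y : ℝ => b * y) b x := by
        simpa using (hasDerivAt_id x).const_mul b
      have hden : HasDerivAt (fun y : ℝ => 2 * Real.sqrt (a ^ 2 - y ^ 2)) (2 * (-x / T)) x :=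
        d2.const_mul 2
      have h := hnum.div hden (by rw [← hT_def]; positivity)
      refine h.congr_deriv ?_
      rw [← hT_def]
      have hT2' : T * T = a ^ 2 - x ^ 2 := by nlinarith
      field_simp
      linear_combination (-x ^ 2) * hT2
    -- bound on g x
    set g : ℝ := b * x / (2 * T) with hg_def
    have hg2 : g ^ 2 < 1 := by
      rw [hg_def, div_pow, div_lt_one (by positivity)]
      have : (2 * T) ^ 2 = 4 * (a ^ 2 - x ^ 2) := by rw [mul_pow, hT2]; ring
      rw [this, mul_pow]
      nlinarith [sq_nonneg x, sq_nonneg b, h4x]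
    have hgabs : |g| < 1 := by
      rw [← Real.sqrt_one]
      rw [show |g| = Real.sqrt (g^2) from (Real.sqrt_sq_eq_abs g).symm]
      exact Real.sqrt_lt_sqrt (sq_nonneg g) (by simpa using hg2)
    have hg_lt : g < 1 := (abs_lt.1 hgabs).2
    have hg_gt : -1 < g := (abs_lt.1 hgabs).1
    -- sqrt(1 - g^2)
    have hsqrt1g : Real.sqrt (1 - g ^ 2) = a * S / (2 * T) := by
      rw [show (1 - g ^ 2 : ℝ) = (a * S / (2 * T)) ^ 2 by
        rw [hg_def, div_pow, div_pow, mul_pow, mul_pow, mul_pow, hS2, hT2]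
        field_simp
        nlinarith [hab]]
      exact Real.sqrt_sq (by positivity)
    have d4 : HasDerivAt (fun y : ℝ => Real.arcsin (b * y / (2 * Real.sqrt (a ^ 2 - y ^ 2))))
        ((1 / Real.sqrt (1 - g ^ 2)) * (b * a ^ 2 / (2 * (a ^ 2 - x ^ 2) * T))) x := by
      have h := (Real.hasDerivAt_arcsin hg_gt.ne' hg_lt.ne).comp x d3
      exact h
    have dF : HasDerivAt F (((s ^ 2 + 1) / (2 * π)) *
        (1 / S - (b / a) * ((1 / Real.sqrt (1 - g ^ 2)) * (b * a ^ 2 / (2 * (a ^ 2 - x ^ 2) * T))))) x := by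
      exact (d1.sub (d4.const_mul (b / a))).const_mul _
    convert dF using 1
    rw [hsqrt1g]
    have e1 : (1 / (a * S / (2 * T))) * (b * a ^ 2 / (2 * (a ^ 2 - x ^ 2) * T))
        = b * a / ((a ^ 2 - x ^ 2) * S) := by
      field_simp
    rw [e1]
    have e2 : 1 / S - b / a * (b * a / ((a ^ 2 - x ^ 2) * S)) = S / (a ^ 2 - x ^ 2) := by
      rw [div_mul_div_comm]
      field_simp
      linear_combination hab - hS2
    rw [e2]
    rw [show Real.sqrt (1 - x ^ 2 / 4) = S / 2 by
      rw [show (1 - x ^ 2 / 4 : ℝ) = (S / 2) ^ 2 by linear_combination (-(1:ℝ)/4) * hS2]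
      exact Real.sqrt_sq (by positivity)]
    field_simp
  -- integrability
  have hint : IntervalIntegrable (fun x => ((s ^ 2 + 1) / π) * Real.sqrt (1 - x ^ 2 / 4)
      / (a ^ 2 - x ^ 2)) volume (-2) 2 := by
    apply ContinuousOn.intervalIntegrable
    rw [Set.uIcc_of_le (by norm_num : (-2:ℝ) ≤ 2)]
    apply ContinuousOn.div
    · exact (continuous_const.mul (Real.continuous_sqrt.comp (by fun_prop))).continuousOn
    · fun_prop
    · intro x hx; exact (hax x hx).ne'
  have hFTC := intervalIntegral.integral_eq_sub_of_hasDeriv_right_of_le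
    (by norm_num : (-2:ℝ) ≤ 2) hcontF
    (fun x hx => (hderiv x hx).hasDerivWithinAt) hint
  rw [hFTC]
  -- endpoint values
  have hF2 : F 2 = ((s ^ 2 + 1) / (2 * π)) * (π / 2 - (b / a) * (π / 2)) := by
    rw [hF_def]
    simp only
    rw [show ((2:ℝ)/2) = 1 by norm_num, Real.arcsin_one]
    rw [show (a ^ 2 - (2:ℝ) ^ 2) = b ^ 2 by rw [← hb2]; norm_num]
    rw [Real.sqrt_sq hb0.le]
    rw [show b * 2 / (2 * b) = 1 by rw [mul_comm b 2]; exact div_self (by positivity)]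
    rw [Real.arcsin_one]
  have hFm2 : F (-2) = ((s ^ 2 + 1) / (2 * π)) * (-(π / 2) - (b / a) * (-(π / 2))) := by
    rw [hF_def]
    simp only
    rw [show ((-2:ℝ)/2) = -1 by norm_num, Real.arcsin_neg_one]
    rw [show (a ^ 2 - (-2:ℝ) ^ 2) = b ^ 2 by rw [← hb2]; norm_num]
    rw [Real.sqrt_sq hb0.le]
    rw [show b * (-2) / (2 * b) = -1 by
      rw [show b * (-2) = -(2 * b) by ring, neg_div]
      rw [div_self (by positivity : (2*b) ≠ 0)]]
    rw [Real.arcsin_neg_one]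
  rw [hF2, hFm2]
  have key : s * ((s ^ 2 + 1) * (a - b)) = s * (2 * a) := by
    linear_combination (s ^ 2 + 1) * hsab - (s ^ 2 + 1) * hbab - 2 * hsab
  have key2 : (s ^ 2 + 1) * (a - b) = 2 * a := mul_left_cancel₀ hs0.ne' key
  field_simp
  linear_combination 2 * key2
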